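/- Let A, B be symmetric n×n real matrices with A positive definite, and let δ > 0 satisfy ‖δ A⁻¹ B‖_op ≤ 1/2. Then there exists c ∈ [-2, 2] such that tr[(A − δB)⁻¹] = tr[A⁻¹] + δ·tr[A⁻¹ B A⁻¹] + c·δ²·tr[A⁻¹ B A⁻¹ B A⁻¹]. -/

import Mathlib

open Matrix

/-- `|B|`: the matrix obtained by replacing each eigenvalue of the symmetric matrix `B`
by its absolute value, realized as the PSD square root of `Bᴴ * B`. -/
noncomputable def matAbs {n : ℕ} (B : Matrix (Fin n) (Fin n) ℝ) : Matrix (Fin n) (Fin n) ℝ :=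
  (Matrix.posSemidef_conjTranspose_mul_self B).1.eigenvectorUnitary.1 *
    diagonal ((↑) ∘ ((Matrix.posSemidef_conjTranspose_mul_self B).1.eigenvalues · |>.sqrt)) *
    (star (Matrix.posSemidef_conjTranspose_mul_self B).1.eigenvectorUnitary : Matrix (Fin n) (Fin n) ℝ)

/-- operator norm (largest singular value) of a matrix. -/
noncomputable def opNorm {n : ℕ} (M : Matrix (Fin n) (Fin n) ℝ) : ℝ :=
  ‖Matrix.toEuclideanCLM (𝕜 := ℝ) M‖

lemma sum_taylor_aux {n : ℕ} (μ d : Fin n → ℝ) (hμ : ∀ i, |μ i| ≤ 1/2) (hd : ∀ i, 0 ≤ d i) :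
    ∃ c ∈ Set.Icc (-2:ℝ) 2,
      ∑ i, (1 - μ i)⁻¹ * d i = ∑ i, d i + ∑ i, μ i * d i + c * ∑ i, μ i ^ 2 * d i := by
  have hpos : ∀ i, (0:ℝ) < 1 - μ i := by
    intro i; have := abs_le.1 (hμ i); linarith [this.2]
  set r : Fin n → ℝ := fun i => μ i ^ 2 / (1 - μ i) with hr
  have hsplit : ∀ i, (1 - μ i)⁻¹ = 1 + μ i + r i := by
    intro i
    have h := (hpos i).ne'
    simp only [hr]
    field_simp
    ring
  set R := ∑ i, r i * d i with hR
  set T := ∑ i, μ i ^ 2 * d i with hT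
  have hrle : ∀ i, r i * d i ≤ 2 * (μ i ^ 2 * d i) := by
    intro i
    have : r i ≤ 2 * μ i ^ 2 := by
      rw [hr, div_le_iff₀ (hpos i)]
      have := abs_le.1 (hμ i)
      nlinarith [sq_nonneg (μ i)]
    nlinarith [hd i, sq_nonneg (μ i), mul_nonneg (div_nonneg (sq_nonneg (μ i)) (hpos i).le) (hd i)]
  have hrnn : ∀ i, 0 ≤ r i * d i := fun i =>
    mul_nonneg (div_nonneg (sq_nonneg _) (hpos i).le) (hd i)
  have hR0 : 0 ≤ R := Finset.sum_nonneg fun i _ => hrnn i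
  have hRT : R ≤ 2 * T := by
    rw [hR, hT, Finset.mul_sum]
    exact Finset.sum_le_sum fun i _ => hrle i
  have hT0 : 0 ≤ T := Finset.sum_nonneg fun i _ => mul_nonneg (sq_nonneg _) (hd i)
  have hmain : ∑ i, (1 - μ i)⁻¹ * d i = ∑ i, d i + ∑ i, μ i * d i + R := by
    rw [hR, ← Finset.sum_add_distrib, ← Finset.sum_add_distrib]
    refine Finset.sum_congr rfl fun i _ => ?_
    rw [hsplit i]; ring
  by_cases hTz : T = 0
  · refine ⟨0, by norm_num, ?_⟩
    have hRz : R = 0 := le_antisymm (by linarith) hR0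
    rw [hmain, hRz, hTz]; ring
  · have hTpos : 0 < T := lt_of_le_of_ne hT0 (Ne.symm hTz)
    refine ⟨R / T, ⟨le_trans (by norm_num : (-2:ℝ) ≤ 0) (by positivity), ?_⟩, ?_⟩
    · rw [div_le_iff₀ hTpos]; linarith
    · rw [hmain, div_mul_cancel₀ _ hTz]

theorem trace_inverse_taylor {n : ℕ} (A B : Matrix (Fin n) (Fin n) ℝ)
    (hA : A.PosDef) (hB : B.IsSymm) (δ : ℝ) (hδ : 0 < δ)
    (hop : opNorm (δ • (A⁻¹ * B)) ≤ 1 / 2) :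
    ∃ c ∈ Set.Icc (-2 : ℝ) 2,
      ((A - δ • B)⁻¹).trace =
        (A⁻¹).trace + δ * (A⁻¹ * B * A⁻¹).trace
          + c * δ ^ 2 * (A⁻¹ * B * A⁻¹ * B * A⁻¹).trace := by
  have hAinv : (A⁻¹).PosDef := hA.inv
  set S : Matrix (Fin n) (Fin n) ℝ := (open scoped MatrixOrder in CFC.sqrt (A⁻¹)) with hSdef
  have hSS : S * S = A⁻¹ := by
    open scoped MatrixOrder in exact CFC.sqrt_mul_sqrt_self _ hAinv.posSemidef.nonneg
  have hSherm : Sᴴ = S := by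
    open scoped MatrixOrder in exact (CFC.sqrt_nonneg _).posSemidef.1
  have hAdet : IsUnit A.det := hA.det_pos.ne'.isUnit
  have hSdet : IsUnit S.det := by
    have h1 : S.det * S.det = (A⁻¹).det := by rw [← det_mul, hSS]
    have h2 : (A⁻¹).det ≠ 0 := (A.isUnit_nonsing_inv_det hAdet).ne_zero
    have : S.det ≠ 0 := fun h => h2 (by rw [← h1, h, mul_zero])
    exact this.isUnit
  have hSinv : S⁻¹ * S = 1 := nonsing_inv_mul S hSdet
  have hSinv' : S * S⁻¹ = 1 := mul_nonsing_inv S hSdet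
  -- N = δ • (S * B * S), symmetric
  set N : Matrix (Fin n) (Fin n) ℝ := δ • (S * B * S) with hNdef
  have hBH : Bᴴ = B := by rw [conjTranspose_eq_transpose_of_trivial]; exact hB
  have hN : N.IsHermitian := by
    rw [IsHermitian, hNdef, conjTranspose_smul, conjTranspose_mul, conjTranspose_mul, hSherm,
      hBH, Matrix.mul_assoc, star_trivial]
  set μ : Fin n → ℝ := hN.eigenvalues with hμdef
  set U : Matrix (Fin n) (Fin n) ℝ := (hN.eigenvectorUnitary : Matrix (Fin n) (Fin n) ℝ) with hUdef
  have hUU : star U * U = 1 := mem_unitaryGroup_iff'.mp hN.eigenvectorUnitary.2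
  have hUU' : U * star U = 1 := mem_unitaryGroup_iff.mp hN.eigenvectorUnitary.2
  have hspec : N = U * diagonal μ * star U := by
    have := hN.spectral_theorem
    simpa using this
  set M : Matrix (Fin n) (Fin n) ℝ := δ • (A⁻¹ * B) with hMdef
  have hMS : M * S = S * N := by
    rw [hMdef, hNdef, Matrix.smul_mul, Matrix.mul_smul]
    congr 1
    rw [← hSS]
    noncomm_ring
  have hμle : ∀ i, |μ i| ≤ 1/2 := by
    intro i
    have hv : N *ᵥ ⇑(hN.eigenvectorBasis i) = μ i • ⇑(hN.eigenvectorBasis i) :=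
      hN.mulVec_eigenvectorBasis i
    set v : Fin n → ℝ := ⇑(hN.eigenvectorBasis i) with hvdef
    have hvnorm : ‖hN.eigenvectorBasis i‖ = 1 := (hN.eigenvectorBasis).orthonormal.1 i
    have hvne : v ≠ 0 := by
      intro h
      have : hN.eigenvectorBasis i = 0 := by
        apply PiLp.ext
        intro j
        have := congrFun h j
        simpa using this
      rw [this] at hvnorm
      simp at hvnorm
    set w : Fin n → ℝ := S *ᵥ v with hwdef
    have hwne : w ≠ 0 := by
      intro h
      apply hvne
      have : S⁻¹ *ᵥ (S *ᵥ v) = v := by rw [mulVec_mulVec, hSinv, one_mulVec]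
      rw [← this, ← hwdef, h, mulVec_zero]
    have hMw : M *ᵥ w = μ i • w := by
      rw [hwdef, mulVec_mulVec, hMS, ← mulVec_mulVec, hv, mulVec_smul]
    set w' : EuclideanSpace ℝ (Fin n) := (WithLp.equiv 2 _).symm w with hw'def
    have hw'ne : w' ≠ 0 := by
      intro h
      apply hwne
      funext j
      have := congrArg (fun z => WithLp.equiv 2 (Fin n → ℝ) z j) h
      simpa [hw'def] using this
    have hclm : toEuclideanCLM (𝕜 := ℝ) M w' = μ i • w' := by
      rw [hw'def, WithLp.equiv_symm_apply, toEuclideanCLM_toLp, hMw]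
      simp
    have hle : ‖toEuclideanCLM (𝕜 := ℝ) M w'‖ ≤ opNorm M * ‖w'‖ :=
      (toEuclideanCLM (𝕜 := ℝ) M).le_opNorm w'
    rw [hclm, norm_smul, Real.norm_eq_abs] at hle
    have hw'pos : 0 < ‖w'‖ := norm_pos_iff.mpr hw'ne
    have := (mul_le_mul_iff_of_pos_right hw'pos).mp hle
    exact this.trans hop
  -- weights d i
  set P : Matrix (Fin n) (Fin n) ℝ := star U * A⁻¹ * U with hPdef
  have hPps : P.PosSemidef := by
    have := hAinv.posSemidef.conjTranspose_mul_mul_same U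
    simpa [hPdef, star_eq_conjTranspose] using this
  set d : Fin n → ℝ := fun i => P i i with hddef
  have hd : ∀ i, 0 ≤ d i := by
    intro i
    have := hPps.diag_nonneg (i := i)
    simpa [hddef] using this
  clear_value S N μ U M P d
  have key : ∀ f : Fin n → ℝ, (S * (U * diagonal f * star U) * S).trace = ∑ i, f i * d i := by
    intro f
    have h1 : (S * (U * diagonal f * star U) * S).trace
        = (S * S * (U * diagonal f * star U)).trace := trace_mul_cycle S _ S
    rw [h1, hSS, trace_mul_comm]
    simp only [Matrix.mul_assoc]
    rw [trace_mul_comm]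
    simp only [← Matrix.mul_assoc]
    have h4 : diagonal f * star U * A⁻¹ * U = diagonal f * P := by
      rw [hPdef]; simp only [Matrix.mul_assoc]
    rw [h4]
    simp [Matrix.trace, Matrix.diag, Matrix.diagonal_mul, hddef]
  have gpos : ∀ i, (0:ℝ) < 1 - μ i := by
    intro i; have := abs_le.1 (hμle i); linarith [this.2]
  have gne : ∀ i, (1:ℝ) - μ i ≠ 0 := fun i => (gpos i).ne'
  -- trace of A⁻¹
  have e0 : A⁻¹ = S * (U * diagonal (fun _ => (1:ℝ)) * star U) * S := by
    have h5 : diagonal (fun _ : Fin n => (1:ℝ)) = 1 := by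
      exact diagonal_one
    rw [h5, Matrix.mul_one, hUU', Matrix.mul_one, hSS]
  have t0 : (A⁻¹).trace = ∑ i, d i := by
    conv_lhs => rw [e0]
    rw [key]
    simp
  -- first order term
  have e1 : S * (U * diagonal μ * star U) * S = δ • (A⁻¹ * B * A⁻¹) := by
    rw [← hspec, hNdef, Matrix.mul_smul, Matrix.smul_mul, ← hSS]
    congr 1
    simp only [Matrix.mul_assoc]
  have t1 : δ * (A⁻¹ * B * A⁻¹).trace = ∑ i, μ i * d i := by
    rw [show δ * (A⁻¹ * B * A⁻¹).trace = (δ • (A⁻¹ * B * A⁻¹)).trace from (trace_smul δ _).symm,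
      ← e1, key]
  -- second order term
  have hNN : U * diagonal (fun i => μ i ^ 2) * star U = N * N := by
    have h6 : diagonal (fun i => μ i ^ 2) = diagonal μ * diagonal μ := by
      rw [diagonal_mul_diagonal]
      exact congrArg diagonal (funext fun i => pow_two (μ i))
    rw [h6]
    conv_rhs => rw [hspec]
    simp only [Matrix.mul_assoc, hUU, Matrix.one_mul]
    rw [← Matrix.mul_assoc (star U) U, hUU, Matrix.one_mul]
  have e2 : S * (U * diagonal (fun i => μ i ^ 2) * star U) * S
      = (δ^2) • (A⁻¹ * B * A⁻¹ * B * A⁻¹) := by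
    rw [hNN, hNdef, smul_mul_smul_comm, ← sq, Matrix.mul_smul, Matrix.smul_mul, ← hSS]
    congr 1
    simp only [Matrix.mul_assoc]
  have t2 : δ^2 * (A⁻¹ * B * A⁻¹ * B * A⁻¹).trace = ∑ i, μ i ^ 2 * d i := by
    rw [← smul_eq_mul, ← trace_smul, ← e2, key]
  -- the inverse
  have hdiaginv : diagonal (fun i => (1:ℝ) - μ i) * diagonal (fun i => ((1:ℝ) - μ i)⁻¹) = 1 := by
    rw [diagonal_mul_diagonal]
    have h7 : (fun i => ((1:ℝ) - μ i) * ((1:ℝ) - μ i)⁻¹) = (1 : Fin n → ℝ) := by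
      funext i
      simp [mul_inv_cancel₀ (gne i)]
    rw [h7]
    exact diagonal_one
  have hAδ : A - δ • B = S⁻¹ * (U * diagonal (fun i => (1:ℝ) - μ i) * star U) * S⁻¹ := by
    have h1m : U * diagonal (fun i => (1:ℝ) - μ i) * star U = 1 - N := by
      have h8 : diagonal (fun i => (1:ℝ) - μ i) = 1 - diagonal μ := by
        rw [← diagonal_one, diagonal_sub]
      rw [h8, Matrix.mul_sub, Matrix.sub_mul, Matrix.mul_one, hUU', ← hspec]
    rw [h1m, Matrix.mul_sub, Matrix.sub_mul, Matrix.mul_one]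
    have h9 : S⁻¹ * S⁻¹ = A := by
      rw [← Matrix.mul_inv_rev, hSS, nonsing_inv_nonsing_inv A hAdet]
    have h10 : S⁻¹ * N * S⁻¹ = δ • B := by
      rw [hNdef, Matrix.mul_smul, Matrix.smul_mul]
      congr 1
      rw [← Matrix.mul_assoc, ← Matrix.mul_assoc, hSinv, Matrix.one_mul, Matrix.mul_assoc,
        hSinv', Matrix.mul_one]
    rw [h9, h10]
  have hinv : (A - δ • B)⁻¹ = S * (U * diagonal (fun i => ((1:ℝ) - μ i)⁻¹) * star U) * S := by
    apply inv_eq_right_inv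
    rw [hAδ]
    simp only [Matrix.mul_assoc]
    rw [← Matrix.mul_assoc S⁻¹ S, hSinv, Matrix.one_mul]
    rw [← Matrix.mul_assoc (star U) U, hUU, Matrix.one_mul]
    rw [← Matrix.mul_assoc (diagonal (fun i => (1:ℝ) - μ i)) (diagonal (fun i => ((1:ℝ) - μ i)⁻¹)),
      hdiaginv, Matrix.one_mul]
    rw [← Matrix.mul_assoc U (star U), hUU', Matrix.one_mul, hSinv]
  have t3 : ((A - δ • B)⁻¹).trace = ∑ i, ((1:ℝ) - μ i)⁻¹ * d i := by
    rw [hinv, key]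
  obtain ⟨c, hc, hsum⟩ := sum_taylor_aux μ d hμle hd
  refine ⟨c, hc, ?_⟩
  rw [t3, hsum, ← t0, ← t1, mul_assoc c, ← t2]
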